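/- Let w ∈ W, α ∈ Φ⁺, and let m be an integer with m ≥ 0 if wα ∈ Φ⁺ and m ≥ 1 if wα ∈ Φ⁻ (i.e., (α, m) is a valid edge label at w in DBG(W)). Then m⟨α∨, 2ρ⟩ ≥ ℓ(w) − ℓ(ws_α) + 1, and equality holds if and only if either (m = 0 and ℓ(ws_α) = ℓ(w) + 1) or (m = 1 and ℓ(ws_α) = ℓ(w) + 1 − ⟨α∨, 2ρ⟩), i.e., if and only if w →^{(α,m)} ws_α is a labelled edge of QBG(W). -/

import Mathlib

noncomputable section

open Module

variable {V : Type} [AddCommGroup V] [Module ℝ V] [DecidableEq V]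

/-- A finite crystallographic root system in `V`, together with a choice of positive roots. -/
structure RootSystemData (V : Type) [AddCommGroup V] [Module ℝ V] where
  /-- the (finite) set of roots -/
  Φ : Finset V
  /-- the set of positive roots -/
  pos : Finset V
  /-- the coroot `α∨`, viewed as a linear functional on `V` (only its values on `Φ` matter) -/
  coroot : V → Module.Dual ℝ V
  /-- the integer-valued pairing `⟨α∨, β⟩` (crystallographic condition) -/
  pairing : V → V → ℤ
  /-- the reflection `s_α` (only its values for `α ∈ Φ` matter) -/
  s : V → V ≃ₗ[ℝ] V
  span_eq : Submodule.span ℝ (Φ : Set V) = ⊤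
  ne_zero : ∀ α ∈ Φ, α ≠ (0 : V)
  neg_mem : ∀ α ∈ Φ, -α ∈ Φ
  coroot_self : ∀ α ∈ Φ, coroot α α = 2
  pairing_eq : ∀ α ∈ Φ, ∀ β ∈ Φ, (pairing α β : ℝ) = coroot α β
  s_apply : ∀ α ∈ Φ, ∀ v : V, s α v = v - coroot α v • α
  s_root_mem : ∀ α ∈ Φ, ∀ β ∈ Φ, s α β ∈ Φ
  pos_subset : pos ⊆ Φ
  mem_pos_or : ∀ α ∈ Φ, α ∈ pos ∨ -α ∈ pos
  pos_not_neg : ∀ α ∈ pos, -α ∉ pos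
  pos_add_mem : ∀ α ∈ pos, ∀ β ∈ pos, α + β ∈ Φ → α + β ∈ pos

namespace RootSystemData

variable (R : RootSystemData V)

/-- The Weyl group `W`, realized as a subgroup of the linear automorphisms of `V`,
generated by the reflections in the roots. -/
def Wgrp : Subgroup (V ≃ₗ[ℝ] V) := Subgroup.closure ((fun α => R.s α) '' (R.Φ : Set V))

/-- The length function `ℓ(w) = #{α ∈ Φ⁺ : w α ∈ Φ⁻}`. -/
def len (w : V ≃ₗ[ℝ] V) : ℕ := (R.pos.filter fun α => -(w α) ∈ R.pos).card

/-- `⟨α∨, 2ρ⟩ = Σ_{β ∈ Φ⁺} ⟨α∨, β⟩` (an integer). -/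
def pairSum (α : V) : ℤ := ∑ β ∈ R.pos, R.pairing α β

/-- The affine reflection `r_b` (for `b = (γ, ν) ∈ Φ_af`) applied to an affine root `c = (α, k)`:
`r_b (α, k) = (s_γ α, k − ν ⟨γ∨, α⟩)`. -/
def afRefl (b c : V × ℤ) : V × ℤ := (R.s b.1 c.1, c.2 - b.2 * R.pairing b.1 c.1)

/-- Positivity of an affine root `(α, n)`: either `α ∈ Φ⁺` and `n ≥ 0`, or `α ∈ Φ⁻` and `n ≥ 1`. -/
def AfPos (c : V × ℤ) : Prop := (c.1 ∈ R.pos ∧ 0 ≤ c.2) ∨ (-c.1 ∈ R.pos ∧ 1 ≤ c.2)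

/-- The affine reflection `r_b = s_γ t^{ν γ∨}` (for `b = (γ, ν)`), as an element of the
affine Weyl group realized as pairs `(w, μ) ∈ W × (coweights)` representing `w t^μ`. -/
def rE (b : V × ℤ) : (V ≃ₗ[ℝ] V) × Module.Dual ℝ V := (R.s b.1, (b.2 : ℝ) • R.coroot b.1)

end RootSystemData

/-- Multiplication in the affine Weyl group `W̃ = W ⋉ Λ`, where `(w, μ)` represents `w t^μ`:
`(w t^μ)(w' t^{μ'}) = (w w') t^{w'⁻¹ μ + μ'}`, and the contragredient action on coweights is
`w'⁻¹ • μ = μ ∘ w'`. -/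
def amul (x y : (V ≃ₗ[ℝ] V) × Module.Dual ℝ V) : (V ≃ₗ[ℝ] V) × Module.Dual ℝ V :=
  (x.1 * y.1, x.2 ∘ₗ y.1.toLinearMap + y.2)

/-- The ordered product `x₁ x₂ ⋯ x_k` in the affine Weyl group. -/
def aprod (l : List ((V ≃ₗ[ℝ] V) × Module.Dual ℝ V)) : (V ≃ₗ[ℝ] V) × Module.Dual ℝ V :=
  l.foldr amul (1, 0)

namespace RootSystemData

variable (R : RootSystemData V)

/-- Given affine roots `b 0, …, b (K-1)`, this is `r_{b_{K-1}} ⋯ r_{b_{h+1}} r_{b_h} (b h)`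
(apply the reflections with indices `≥ h` in ascending order of application). -/
def twist {K : ℕ} (b : Fin K → V × ℤ) (h : Fin K) : V × ℤ :=
  (((List.finRange K).filter fun j => h ≤ j).foldl (fun c j => R.afRefl (b j) c) (b h))

/-- Given affine roots `b 0, …, b (K-1)`, this is `r_{b_{K-1}} ⋯ r_{b_{h+1}} (b h)`
(apply the reflections with indices `> h` in ascending order of application). -/
def twistStrict {K : ℕ} (b : Fin K → V × ℤ) (h : Fin K) : V × ℤ :=
  (((List.finRange K).filter fun j => h < j).foldl (fun c j => R.afRefl (b j) c) (b h))

end RootSystemData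

/-- A reflection order on `Φ⁺`, given by an enumeration `β 0 ≺ β 1 ≺ ⋯ ≺ β (N-1)` of the
positive roots such that whenever `β i + β j = β k` one has `i < k < j` or `j < k < i`. -/
structure ReflectionOrder (R : RootSystemData V) (N : ℕ) where
  β : Fin N → V
  inj : Function.Injective β
  range_eq : Set.range β = (R.pos : Set V)
  order3 : ∀ i j k : Fin N, β i + β j = β k → (i < k ∧ k < j) ∨ (j < k ∧ k < i)

/-- An increasing labelled path in the double Bruhat graph `DBG(W)` from `u` to `v`:
a sequence of edges `u = u₁ → u₂ → ⋯ → u_{ℓ+1} = v`, whose labels are positive roots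
`lab (ix 1), …, lab (ix ℓ)` with `ix` strictly monotone (so the path is increasing for the
order given by the enumeration `lab`) and all indices lying in the allowed set `S`;
the edge from `u_i` carries an integer `m i ≥ 0`, with `m i ≥ 1` if `u_i (α_i) ∈ Φ⁻`. -/
structure IncPath (R : RootSystemData V) {N : ℕ} (lab : Fin N → V) (S : Set (Fin N))
    (u v : V ≃ₗ[ℝ] V) where
  len : ℕ
  ix : Fin len → Fin N
  mono : StrictMono ix
  mem_S : ∀ i, ix i ∈ S
  m : Fin len → ℤ
  vert : Fin (len + 1) → V ≃ₗ[ℝ] V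
  vert_zero : vert 0 = u
  vert_last : vert (Fin.last len) = v
  lab_mem : ∀ i : Fin len, lab (ix i) ∈ R.pos
  step : ∀ i : Fin len, vert i.succ = vert i.castSucc * R.s (lab (ix i))
  m_lb : ∀ i : Fin len, (if vert i.castSucc (lab (ix i)) ∈ R.pos then (0 : ℤ) else 1) ≤ m i

/-- The weight `wt(p) = m₁ α₁∨ + ⋯ + m_ℓ α_ℓ∨` of a path, as a coweight. -/
def IncPath.wt {R : RootSystemData V} {N : ℕ} {lab : Fin N → V} {S : Set (Fin N)}
    {u v : V ≃ₗ[ℝ] V} (p : IncPath R lab S u v) : Module.Dual ℝ V :=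
  ∑ i : Fin p.len, (p.m i : ℝ) • R.coroot (lab (p.ix i))

/-- A path in the quantum Bruhat graph `QBG(W)` from `u` to `v`: every edge is either an
edge `w →^{(α,0)} w s_α` with `ℓ(w s_α) = ℓ(w) + 1`, or an edge `w →^{(α,1)} w s_α` with
`ℓ(w s_α) = ℓ(w) + 1 − ⟨α∨, 2ρ⟩`. -/
structure QPath (R : RootSystemData V) (u v : V ≃ₗ[ℝ] V) where
  len : ℕ
  lab : Fin len → V
  lab_mem : ∀ i, lab i ∈ R.pos
  m : Fin len → ℤ
  vert : Fin (len + 1) → V ≃ₗ[ℝ] V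
  vert_zero : vert 0 = u
  vert_last : vert (Fin.last len) = v
  step : ∀ i : Fin len, vert i.succ = vert i.castSucc * R.s (lab i)
  edge : ∀ i : Fin len,
    (m i = 0 ∧ R.len (vert i.succ) = R.len (vert i.castSucc) + 1) ∨
    (m i = 1 ∧ (R.len (vert i.succ) : ℤ) = (R.len (vert i.castSucc) : ℤ) + 1 - R.pairSum (lab i))

/-- The weight of a path in the quantum Bruhat graph. -/
def QPath.wt {R : RootSystemData V} {u v : V ≃ₗ[ℝ] V} (q : QPath R u v) : Module.Dual ℝ V :=
  ∑ i : Fin q.len, (q.m i : ℝ) • R.coroot (q.lab i)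

/-- A simple root: a positive root that is not the sum of two positive roots. -/
def IsSimpleRoot (R : RootSystemData V) (α : V) : Prop :=
  α ∈ R.pos ∧ ¬ ∃ β ∈ R.pos, ∃ γ ∈ R.pos, α = β + γ

/-- `l` is a reduced word for `w`: a list of simple roots whose reflections multiply to `w`,
of length `ℓ(w)`. -/
def IsReducedWord (R : RootSystemData V) (l : List V) (w : V ≃ₗ[ℝ] V) : Prop :=
  (∀ a ∈ l, IsSimpleRoot R a) ∧ (l.map R.s).prod = w ∧ l.length = R.len w

/-- Bruhat order: `x ≤ y` iff some reduced word for `y` contains a subword which is a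
reduced word for `x`. -/
def BruhatLE (R : RootSystemData V) (x y : V ≃ₗ[ℝ] V) : Prop :=
  ∃ ly : List V, IsReducedWord R ly y ∧ ∃ lx : List V, lx.Sublist ly ∧ IsReducedWord R lx x

/-- An admissible type for `(x, u, ≺)`, bounded by `n`: indices `n₁ < ⋯ < n_K ≤ n` and
integers `ν₁, …, ν_K` such that, with `b_h = (u β_{n_h}, ν_h)`, each
`r_{b_K} ⋯ r_{b_{h+1}} (b_h)` is a negative affine root and `r_{b₁} ⋯ r_{b_K} = x` in `W̃`. -/
structure AdmissibleType (R : RootSystemData V) {N : ℕ} (RO : ReflectionOrder R N) (n : ℕ)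
    (u : V ≃ₗ[ℝ] V) (x : (V ≃ₗ[ℝ] V) × Module.Dual ℝ V) where
  K : ℕ
  idx : Fin K → Fin N
  mono : StrictMono idx
  bounded : ∀ h, (idx h : ℕ) < n
  ν : Fin K → ℤ
  neg_cond : ∀ h : Fin K, ¬ R.AfPos (R.twistStrict (fun j => (u (RO.β (idx j)), ν j)) h)
  prod_eq : aprod (List.ofFn fun h : Fin K => R.rE (u (RO.β (idx h)), ν h)) = x


set_option linter.unusedSectionVars false

namespace RootSystemData

variable (R : RootSystemData V)

lemma s_invol {α : V} (hα : α ∈ R.Φ) (v : V) : R.s α (R.s α v) = v := by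
  rw [R.s_apply α hα v, R.s_apply α hα]
  have : R.coroot α (v - R.coroot α v • α) = R.coroot α v - R.coroot α v * 2 := by
    simp [map_sub, map_smul, R.coroot_self α hα, smul_eq_mul]
  rw [this]
  module

lemma s_neg_self {α : V} (hα : α ∈ R.Φ) : R.s α α = -α := by
  rw [R.s_apply α hα α, R.coroot_self α hα]
  module

lemma image_phi_eq {g : V ≃ₗ[ℝ] V} (hg : g ∈ R.Wgrp) :
    R.Φ.image (fun v => g v) = R.Φ := by
  induction hg using Subgroup.closure_induction with
  | mem x hx =>
    obtain ⟨α, hα, rfl⟩ := hx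
    apply Finset.eq_of_subset_of_card_le
    · intro v hv
      simp only [Finset.mem_image] at hv
      obtain ⟨β, hβ, rfl⟩ := hv
      exact R.s_root_mem α hα β hβ
    · rw [Finset.card_image_of_injective _ (R.s α).injective]
  | one => simp
  | mul x y hx hy ihx ihy =>
    have : R.Φ.image (fun v => (x * y) v) = (R.Φ.image (fun v => y v)).image (fun v => x v) := by
      rw [Finset.image_image]; rfl
    rw [this, ihy, ihx]
  | inv x hx ih =>
    nth_rewrite 1 [← ih]
    rw [Finset.image_image]
    have : ((fun v => x⁻¹ v) ∘ (fun v => x v)) = id := by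
      funext v; exact x.symm_apply_apply v
    rw [this, Finset.image_id]

lemma maps_phi {g : V ≃ₗ[ℝ] V} (hg : g ∈ R.Wgrp) {v : V} (hv : v ∈ R.Φ) : g v ∈ R.Φ := by
  rw [← R.image_phi_eq hg]
  exact Finset.mem_image_of_mem _ hv

lemma s_mem_Wgrp {α : V} (hα : α ∈ R.Φ) : R.s α ∈ R.Wgrp :=
  Subgroup.subset_closure ⟨α, hα, rfl⟩

lemma finite_Wgrp (R : RootSystemData V) : Finite R.Wgrp := by
  have hmap : ∀ g : R.Wgrp, ∀ v : {x // x ∈ R.Φ}, (g : V ≃ₗ[ℝ] V) v.1 ∈ R.Φ :=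
    fun g v => R.maps_phi g.2 v.2
  have hinj : Function.Injective (fun g : R.Wgrp => fun v : {x // x ∈ R.Φ} =>
      (⟨(g : V ≃ₗ[ℝ] V) v.1, hmap g v⟩ : {x // x ∈ R.Φ})) := by
    intro g h hgh
    have h1 : ∀ v ∈ (R.Φ : Set V), (g : V ≃ₗ[ℝ] V) v = (h : V ≃ₗ[ℝ] V) v := by
      intro v hv
      exact congrArg Subtype.val (congrFun hgh ⟨v, hv⟩)
    have h2 : (g : V ≃ₗ[ℝ] V).toLinearMap = (h : V ≃ₗ[ℝ] V).toLinearMap :=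
      LinearMap.ext_on R.span_eq h1
    ext v
    exact congrArg (fun f => f v) h2
  exact Finite.of_injective _ hinj

lemma findim (R : RootSystemData V) : FiniteDimensional ℝ V := by
  have : FiniteDimensional ℝ (Submodule.span ℝ (R.Φ : Set V)) :=
    FiniteDimensional.span_of_finite ℝ (R.Φ.finite_toSet)
  rw [R.span_eq] at this
  exact Module.Finite.equiv (Submodule.topEquiv)

def B0 : V → V → ℝ := fun x y =>
  haveI := R.findim
  ∑ i, (Module.finBasis ℝ V).repr x i * (Module.finBasis ℝ V).repr y i

lemma B0_symm (x y : V) : R.B0 x y = R.B0 y x := by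
  unfold B0; exact Finset.sum_congr rfl fun i _ => mul_comm _ _

lemma B0_add_left (x x' y : V) : R.B0 (x + x') y = R.B0 x y + R.B0 x' y := by
  unfold B0; rw [← Finset.sum_add_distrib]
  exact Finset.sum_congr rfl fun i _ => by rw [map_add]; simp [add_mul]

lemma B0_smul_left (c : ℝ) (x y : V) : R.B0 (c • x) y = c * R.B0 x y := by
  unfold B0; rw [Finset.mul_sum]
  exact Finset.sum_congr rfl fun i _ => by rw [map_smul]; simp [mul_assoc]

lemma B0_self_nonneg (x : V) : 0 ≤ R.B0 x x :=
  Finset.sum_nonneg fun i _ => mul_self_nonneg _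

lemma B0_self_pos {x : V} (hx : x ≠ 0) : 0 < R.B0 x x := by
  rcases (R.B0_self_nonneg x).lt_or_eq with h | h
  · exact h
  · exfalso; apply hx
    haveI := R.findim
    have h1 : ∀ i, (Module.finBasis ℝ V).repr x i = 0 := by
      intro i
      have hz : ∑ j, ((Module.finBasis ℝ V).repr x j * (Module.finBasis ℝ V).repr x j) = 0 := h.symm
      have := (Finset.sum_eq_zero_iff_of_nonneg
        (fun j _ => mul_self_nonneg ((Module.finBasis ℝ V).repr x j))).mp hz i (Finset.mem_univ i)
      exact mul_self_eq_zero.mp this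
    have h2 : (Module.finBasis ℝ V).repr x = 0 := by ext i; exact h1 i
    simpa using congrArg ((Module.finBasis ℝ V).repr.symm) h2

def WFin (R : RootSystemData V) : Fintype R.Wgrp := @Fintype.ofFinite _ R.finite_Wgrp

def Bf : V → V → ℝ := fun x y =>
  ∑ g ∈ (@Finset.univ R.Wgrp R.WFin), R.B0 ((g : V ≃ₗ[ℝ] V) x) ((g : V ≃ₗ[ℝ] V) y)

lemma Bf_symm (x y : V) : R.Bf x y = R.Bf y x := by
  unfold Bf; exact Finset.sum_congr rfl fun g _ => R.B0_symm _ _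

lemma Bf_add_left (x x' y : V) : R.Bf (x + x') y = R.Bf x y + R.Bf x' y := by
  unfold Bf; rw [← Finset.sum_add_distrib]
  exact Finset.sum_congr rfl fun g _ => by rw [map_add, R.B0_add_left]

lemma Bf_smul_left (c : ℝ) (x y : V) : R.Bf (c • x) y = c * R.Bf x y := by
  unfold Bf; rw [Finset.mul_sum]
  exact Finset.sum_congr rfl fun g _ => by rw [map_smul, R.B0_smul_left]

lemma Bf_add_right (x y y' : V) : R.Bf x (y + y') = R.Bf x y + R.Bf x y' := by
  rw [R.Bf_symm, R.Bf_add_left, R.Bf_symm y x, R.Bf_symm y' x]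

lemma Bf_smul_right (c : ℝ) (x y : V) : R.Bf x (c • y) = c * R.Bf x y := by
  rw [R.Bf_symm, R.Bf_smul_left, R.Bf_symm]

lemma Bf_neg_left (x y : V) : R.Bf (-x) y = -R.Bf x y := by
  have := R.Bf_smul_left (-1) x y; simpa using this

lemma Bf_neg_right (x y : V) : R.Bf x (-y) = -R.Bf x y := by
  rw [R.Bf_symm, R.Bf_neg_left, R.Bf_symm]

lemma Bf_sub_left (x x' y : V) : R.Bf (x - x') y = R.Bf x y - R.Bf x' y := by
  rw [sub_eq_add_neg, R.Bf_add_left, R.Bf_neg_left, sub_eq_add_neg]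

lemma Bf_sub_right (x y y' : V) : R.Bf x (y - y') = R.Bf x y - R.Bf x y' := by
  rw [R.Bf_symm, R.Bf_sub_left, R.Bf_symm y x, R.Bf_symm y' x]

lemma Bf_self_nonneg (x : V) : 0 ≤ R.Bf x x := by
  unfold Bf; exact Finset.sum_nonneg fun g _ => R.B0_self_nonneg _

lemma Bf_self_pos {x : V} (hx : x ≠ 0) : 0 < R.Bf x x := by
  letI := R.WFin
  have h1 : R.B0 (((1 : R.Wgrp) : V ≃ₗ[ℝ] V) x) (((1 : R.Wgrp) : V ≃ₗ[ℝ] V) x) ≤ R.Bf x x :=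
    Finset.single_le_sum (f := fun g : R.Wgrp => R.B0 ((g : V ≃ₗ[ℝ] V) x) ((g : V ≃ₗ[ℝ] V) x))
      (fun g _ => R.B0_self_nonneg _) (Finset.mem_univ _)
  have h2 : 0 < R.B0 (((1 : R.Wgrp) : V ≃ₗ[ℝ] V) x) (((1 : R.Wgrp) : V ≃ₗ[ℝ] V) x) := by
    apply R.B0_self_pos
    simpa using hx
  linarith

lemma Bf_eq_zero {x : V} (hx : R.Bf x x = 0) : x = 0 := by
  by_contra h
  exact absurd hx (ne_of_gt (R.Bf_self_pos h))

lemma Bf_s {α : V} (hα : α ∈ R.Φ) (x y : V) : R.Bf (R.s α x) (R.s α y) = R.Bf x y := by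
  letI := R.WFin
  unfold Bf
  set u : R.Wgrp := ⟨R.s α, R.s_mem_Wgrp hα⟩ with hu
  have h := Equiv.sum_comp (Equiv.mulRight u)
    (fun g : R.Wgrp => R.B0 ((g : V ≃ₗ[ℝ] V) x) ((g : V ≃ₗ[ℝ] V) y))
  rw [← h]
  exact Finset.sum_congr rfl fun g _ => rfl

lemma coroot_Bf {α : V} (hα : α ∈ R.Φ) (v : V) :
    R.coroot α v * R.Bf α α = 2 * R.Bf α v := by
  have key := R.Bf_s hα α v
  rw [R.s_neg_self hα, R.s_apply α hα v, R.Bf_neg_left, R.Bf_sub_right, R.Bf_smul_right] at key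
  linarith

lemma pairing_Bf {α : V} (hα : α ∈ R.Φ) {β : V} (hβ : β ∈ R.Φ) :
    (R.pairing α β : ℝ) * R.Bf α α = 2 * R.Bf α β := by
  rw [R.pairing_eq α hα β hβ]
  exact R.coroot_Bf hα β

/-- key geometric lemma: roots with negative inner product sum to a root or to zero. -/
lemma sum_mem_of_Bf_neg {α β : V} (hα : α ∈ R.Φ) (hβ : β ∈ R.Φ)
    (h : R.Bf α β < 0) : α + β ∈ R.Φ ∨ β = -α := by
  have hαα : 0 < R.Bf α α := R.Bf_self_pos (R.ne_zero α hα)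
  have hββ : 0 < R.Bf β β := R.Bf_self_pos (R.ne_zero β hβ)
  have ha := R.pairing_Bf hα hβ
  have hb := R.pairing_Bf hβ hα
  rw [R.Bf_symm β α] at hb
  have haneg : R.pairing α β < 0 := by
    by_contra hc
    push_neg at hc
    have : (0:ℝ) ≤ (R.pairing α β : ℝ) := by exact_mod_cast hc
    nlinarith
  have hbneg : R.pairing β α < 0 := by
    by_contra hc
    push_neg at hc
    have : (0:ℝ) ≤ (R.pairing β α : ℝ) := by exact_mod_cast hc
    nlinarith
  by_cases ha1 : R.pairing α β = -1
  · left
    have : R.s α β = β + α := by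
      rw [R.s_apply α hα β, ← R.pairing_eq α hα β hβ, ha1]
      module
    have hmem := R.s_root_mem α hα β hβ
    rw [this] at hmem
    rwa [add_comm]
  · by_cases hb1 : R.pairing β α = -1
    · left
      have : R.s β α = α + β := by
        rw [R.s_apply β hβ α, ← R.pairing_eq β hβ α hα, hb1]
        module
      have hmem := R.s_root_mem β hβ α hα
      rwa [this] at hmem
    · -- both pairings ≤ -2; force proportionality
      right
      have ha2 : R.pairing α β ≤ -2 := by omega
      have hb2 : R.pairing β α ≤ -2 := by omega
      have ha2' : (R.pairing α β : ℝ) ≤ -2 := by exact_mod_cast ha2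
      have hb2' : (R.pairing β α : ℝ) ≤ -2 := by exact_mod_cast hb2
      set t : ℝ := (R.pairing α β : ℝ) / 2 with ht
      have ht1 : t ≤ -1 := by rw [ht]; linarith
      have hBαβ : R.Bf α β = t * R.Bf α α := by rw [ht]; linarith
      -- show β = t • α
      have hexp : R.Bf (β - t • α) (β - t • α) = R.Bf β β - t * t * R.Bf α α := by
        simp only [Bf_sub_left, Bf_sub_right, Bf_smul_left, Bf_smul_right]
        rw [R.Bf_symm β α, hBαβ]
        ring
      -- b * Bββ = 2 t Bαα, b ≤ -2 ⟹ Bββ ≤ -t Bαα ≤ t² Bαα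
      have hb3 : (R.pairing β α : ℝ) * R.Bf β β = 2 * t * R.Bf α α := by
        rw [hBαβ] at hb; linarith
      have hββle : R.Bf β β ≤ t * t * R.Bf α α := by nlinarith
      have hzero : R.Bf (β - t • α) (β - t • α) = 0 :=
        le_antisymm (by rw [hexp]; linarith) (R.Bf_self_nonneg _)
      have hprop : β = t • α := sub_eq_zero.mp (R.Bf_eq_zero hzero)
      have hββeq : R.Bf β β = t * t * R.Bf α α := by
        rw [hprop, R.Bf_smul_left, R.Bf_smul_right]; ring
      have htneg : t * R.Bf α α < 0 :=
        mul_neg_of_neg_of_pos (lt_of_le_of_lt ht1 (by norm_num)) hαα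
      have h5 : ((R.pairing β α : ℝ) * t - 2) * (t * R.Bf α α) = 0 := by
        linear_combination hb3 - (R.pairing β α : ℝ) * hββeq
      have hbt : (R.pairing β α : ℝ) * t - 2 = 0 := by
        rcases mul_eq_zero.mp h5 with h' | h'
        · exact h'
        · exact absurd h' (ne_of_lt htneg)
      have ht2 : t = -1 := by
        nlinarith [mul_nonneg (by linarith : (0:ℝ) ≤ -(R.pairing β α : ℝ) - 2)
          (by linarith : (0:ℝ) ≤ -t)]
      rw [hprop, ht2]
      module

lemma pairing_self {α : V} (hα : α ∈ R.Φ) : R.pairing α α = 2 := by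
  have h := R.pairing_eq α hα α hα
  rw [R.coroot_self α hα] at h
  exact_mod_cast h

/-- The string lemma: if `α, β` are positive roots with `⟨α∨,β⟩ ≤ 0` then `s_α β` is positive. -/
lemma s_mem_pos_of_pairing_nonpos {α β : V} (hα : α ∈ R.pos) (hβ : β ∈ R.pos)
    (hc : R.pairing α β ≤ 0) : R.s α β ∈ R.pos := by
  have hαΦ : α ∈ R.Φ := R.pos_subset hα
  have hβΦ : β ∈ R.Φ := R.pos_subset hβ
  set c : ℤ := R.pairing α β with hcdef
  set K : ℕ := (-c).toNat with hKdef
  have hKc : (K : ℝ) = -(c : ℝ) := by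
    have : (K : ℤ) = -c := Int.toNat_of_nonneg (by omega)
    exact_mod_cast this
  have hcor : ∀ k : ℕ, R.coroot α (β + (k : ℝ) • α) = (c : ℝ) + 2 * k := by
    intro k
    rw [map_add, map_smul, R.coroot_self α hαΦ, ← R.pairing_eq α hαΦ β hβΦ, smul_eq_mul]
    ring
  have key : ∀ k : ℕ, k ≤ K → β + (k : ℝ) • α ∈ R.pos := by
    intro k
    induction k using Nat.strong_induction_on with
    | _ k ih =>
      intro hk
      match k with
      | 0 => simpa using hβ
      | (j+1) =>
        have hj : j ≤ K := by omega
        have hdj : β + (j : ℝ) • α ∈ R.pos := ih j (by omega) hj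
        have hdjΦ : β + (j : ℝ) • α ∈ R.Φ := R.pos_subset hdj
        have hstep : β + ((j+1 : ℕ) : ℝ) • α ∈ R.Φ := by
          by_cases hc2 : 2*j < K
          · -- inner-product-negative case
            have hcj : R.coroot α (β + (j : ℝ) • α) < 0 := by
              rw [hcor j]
              have : (c : ℝ) ≤ -(K : ℝ) := by rw [hKc]; simp
              have h2j : (2 * (j:ℝ)) < (K : ℝ) := by exact_mod_cast hc2
              linarith
            have hBneg : R.Bf α (β + (j : ℝ) • α) < 0 := by
              have h1 := R.coroot_Bf hαΦ (β + (j : ℝ) • α)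
              have h2 : 0 < R.Bf α α := R.Bf_self_pos (R.ne_zero α hαΦ)
              nlinarith
            rcases R.sum_mem_of_Bf_neg hαΦ hdjΦ hBneg with h | h
            · have heq : α + (β + (j : ℝ) • α) = β + ((j+1 : ℕ) : ℝ) • α := by
                push_cast
                module
              rwa [heq] at h
            · exfalso
              have : -α ∈ R.pos := h ▸ hdj
              exact R.pos_not_neg α hα this
          · -- reflection-symmetric case
            have hKle : K ≤ 2*j := by omega
            set i : ℕ := K - (j+1) with hidef
            have hij : i < j + 1 := by omega
            have hiK : i ≤ K := by omega
            have hdi : β + (i : ℝ) • α ∈ R.pos := ih i hij hiK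
            have hdiΦ : β + (i : ℝ) • α ∈ R.Φ := R.pos_subset hdi
            have hrefl : R.s α (β + (i : ℝ) • α) = β + ((j+1 : ℕ) : ℝ) • α := by
              rw [R.s_apply α hαΦ, hcor i]
              have hicast : (i : ℝ) = (K : ℝ) - ((j:ℝ)+1) := by
                rw [hidef]
                have : ((K - (j+1) : ℕ) : ℤ) = (K : ℤ) - ((j:ℤ)+1) := by omega
                exact_mod_cast this
              rw [hicast, hKc]
              push_cast
              module
            rw [← hrefl]
            exact R.s_root_mem α hαΦ _ hdiΦ
        have heq2 : (β + (j : ℝ) • α) + α = β + ((j+1 : ℕ) : ℝ) • α := by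
          push_cast; module
        rw [← heq2] at hstep ⊢
        exact R.pos_add_mem _ hdj α hα hstep
  have hfin : R.s α β = β + (K : ℝ) • α := by
    rw [R.s_apply α hαΦ, ← R.pairing_eq α hαΦ β hβΦ, hKc]
    module
  rw [hfin]
  exact key K le_rfl

/-- The set `N_α` of positive roots sent to negative roots by `s_α`. -/
def NS (α : V) : Finset V := R.pos.filter (fun β => R.s α β ∉ R.pos)

lemma NS_subset {α : V} : R.NS α ⊆ R.pos := Finset.filter_subset _ _

lemma pairing_one_le {α β : V} (hα : α ∈ R.pos) (hβ : β ∈ R.NS α) : 1 ≤ R.pairing α β := by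
  rw [NS, Finset.mem_filter] at hβ
  by_contra h
  exact hβ.2 (R.s_mem_pos_of_pairing_nonpos hα hβ.1 (by omega))

lemma self_mem_NS {α : V} (hα : α ∈ R.pos) : α ∈ R.NS α := by
  rw [NS, Finset.mem_filter]
  refine ⟨hα, ?_⟩
  rw [R.s_neg_self (R.pos_subset hα)]
  exact R.pos_not_neg α hα

lemma pairing_neg_s {α β : V} (hα : α ∈ R.Φ) (hβ : β ∈ R.Φ) :
    R.pairing α (R.s α β) = -R.pairing α β := by
  have h1 : R.coroot α (R.s α β) = -(R.coroot α β) := by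
    rw [R.s_apply α hα β, map_sub, map_smul, R.coroot_self α hα, smul_eq_mul]
    ring
  have h2 := R.pairing_eq α hα (R.s α β) (R.s_root_mem α hα β hβ)
  have h3 := R.pairing_eq α hα β hβ
  rw [h1, ← h3] at h2
  exact_mod_cast h2

lemma pairSum_eq_NS {α : V} (hα : α ∈ R.pos) :
    R.pairSum α = ∑ β ∈ R.NS α, R.pairing α β := by
  have hαΦ : α ∈ R.Φ := R.pos_subset hα
  have hsplit := Finset.sum_filter_add_sum_filter_not R.pos
    (fun β => R.s α β ∉ R.pos) (fun β => R.pairing α β)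
  have hzero : ∑ β ∈ R.pos.filter (fun β => ¬ (R.s α β ∉ R.pos)), R.pairing α β = 0 := by
    apply Finset.sum_involution (fun a _ => R.s α a)
    · intro a ha
      have haΦ : a ∈ R.Φ := R.pos_subset (Finset.mem_filter.mp ha).1
      rw [R.pairing_neg_s hαΦ haΦ]
      ring
    · intro a ha hfa
      intro hcontra
      apply hfa
      have haΦ : a ∈ R.Φ := R.pos_subset (Finset.mem_filter.mp ha).1
      have := R.pairing_neg_s hαΦ haΦ
      rw [hcontra] at this
      omega
    · intro a ha
      rw [Finset.mem_filter] at ha ⊢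
      push_neg at ha ⊢
      have haΦ : a ∈ R.Φ := R.pos_subset ha.1
      exact ⟨ha.2, by rw [R.s_invol hαΦ]; exact ha.1⟩
    · intro a ha
      exact R.s_invol hαΦ a
  rw [pairSum, ← hsplit, hzero, add_zero]
  rfl

lemma pairSum_ge {α : V} (hα : α ∈ R.pos) :
    ((R.NS α).card : ℤ) + 1 ≤ R.pairSum α := by
  rw [R.pairSum_eq_NS hα]
  have hmem : α ∈ R.NS α := R.self_mem_NS hα
  rw [← Finset.add_sum_erase _ _ hmem, R.pairing_self (R.pos_subset hα)]
  have hbound : ((R.NS α).erase α).card • (1:ℤ) ≤ ∑ β ∈ (R.NS α).erase α, R.pairing α β := by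
    apply Finset.card_nsmul_le_sum
    intro β hβ
    exact R.pairing_one_le hα (Finset.mem_of_mem_erase hβ)
  have hcard : ((R.NS α).erase α).card = (R.NS α).card - 1 := Finset.card_erase_of_mem hmem
  have hpos : 1 ≤ (R.NS α).card := Finset.card_pos.mpr ⟨α, hmem⟩
  simp only [nsmul_eq_mul, mul_one] at hbound
  have : (((R.NS α).erase α).card : ℤ) = ((R.NS α).card : ℤ) - 1 := by
    rw [hcard]; omega
  omega

/-- The strictly positive linear functional on positive roots. -/
def ff : V → ℝ := fun v => ∑ δ ∈ R.pos, R.Bf v δ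

lemma ff_pos {γ : V} (hγ : γ ∈ R.pos) : 0 < R.ff γ := by
  have hγΦ : γ ∈ R.Φ := R.pos_subset hγ
  have hγγ : 0 < R.Bf γ γ := R.Bf_self_pos (R.ne_zero γ hγΦ)
  have hcongr : R.ff γ = ∑ δ ∈ R.pos, (R.pairing γ δ : ℝ) * (R.Bf γ γ / 2) := by
    apply Finset.sum_congr rfl
    intro δ hδ
    have := R.pairing_Bf hγΦ (R.pos_subset hδ)
    linarith
  rw [hcongr, ← Finset.sum_mul]
  have hps : ∑ δ ∈ R.pos, (R.pairing γ δ : ℝ) = ((R.pairSum γ : ℤ) : ℝ) := by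
    rw [pairSum]; push_cast; rfl
  rw [hps]
  have h1 : 0 < R.pairSum γ := by
    have := R.pairSum_ge hγ
    have := Finset.card_pos.mpr ⟨γ, R.self_mem_NS hγ⟩
    omega
  have h2 : (0:ℝ) < ((R.pairSum γ : ℤ) : ℝ) := by exact_mod_cast h1
  positivity

lemma ff_neg_apply (v : V) : R.ff (-v) = -R.ff v := by
  unfold ff
  rw [← Finset.sum_neg_distrib]
  exact Finset.sum_congr rfl fun δ _ => R.Bf_neg_left v δ

lemma ff_neg_of_neg {v : V} (hv : v ∈ R.Φ) (hnv : v ∉ R.pos) : R.ff v < 0 := by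
  have : -v ∈ R.pos := (R.mem_pos_or v hv).resolve_left hnv
  have := R.ff_pos this
  rw [R.ff_neg_apply] at this
  linarith

lemma mem_pos_of_ff_pos {v : V} (hv : v ∈ R.Φ) (hf : 0 < R.ff v) : v ∈ R.pos := by
  by_contra h
  exact absurd hf (not_lt.mpr (le_of_lt (R.ff_neg_of_neg hv h)))

lemma ff_sub (x y : V) : R.ff (x - y) = R.ff x - R.ff y := by
  unfold ff
  rw [← Finset.sum_sub_distrib]
  exact Finset.sum_congr rfl fun δ _ => R.Bf_sub_left x y δ

lemma ff_smul (c : ℝ) (x : V) : R.ff (c • x) = c * R.ff x := by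
  unfold ff
  rw [Finset.mul_sum]
  exact Finset.sum_congr rfl fun δ _ => R.Bf_smul_left c x δ

lemma NS_mem_phi {α : V} {β : V} (hβ : β ∈ R.NS α) : β ∈ R.Φ :=
  R.pos_subset (R.NS_subset hβ)

lemma tau_mem_NS {α β : V} (hα : α ∈ R.pos) (hβ : β ∈ R.NS α) : -(R.s α β) ∈ R.NS α := by
  have hαΦ : α ∈ R.Φ := R.pos_subset hα
  rw [NS, Finset.mem_filter] at hβ ⊢
  obtain ⟨hβp, hβn⟩ := hβ
  have hβΦ : β ∈ R.Φ := R.pos_subset hβp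
  have hsΦ : R.s α β ∈ R.Φ := R.s_root_mem α hαΦ β hβΦ
  refine ⟨(R.mem_pos_or _ hsΦ).resolve_left hβn, ?_⟩
  rw [map_neg, R.s_invol hαΦ]
  exact R.pos_not_neg β hβp

lemma tau_tau {α β : V} (hα : α ∈ R.Φ) : -(R.s α (-(R.s α β))) = β := by
  rw [map_neg, R.s_invol hα, neg_neg]

/-- split of `N_α` by the sign of `w β`. -/
lemma card_NS_split {w : V ≃ₗ[ℝ] V} (hw : w ∈ R.Wgrp) {α : V} (hα : α ∈ R.pos) :
    ((R.NS α).filter (fun β => w β ∈ R.pos)).card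
      + ((R.NS α).filter (fun β => -(w β) ∈ R.pos)).card = (R.NS α).card := by
  have hcongr : (R.NS α).filter (fun β => w β ∈ R.pos)
      = (R.NS α).filter (fun β => ¬ (-(w β) ∈ R.pos)) := by
    apply Finset.filter_congr
    intro β hβ
    have hwβΦ : w β ∈ R.Φ := R.maps_phi hw (R.NS_mem_phi hβ)
    constructor
    · intro h; simpa using R.pos_not_neg _ h
    · intro h; exact (R.mem_pos_or _ hwβΦ).resolve_right (by simpa using h)
  rw [hcongr, add_comm]
  exact Finset.card_filter_add_card_filter_not (fun β => -(w β) ∈ R.pos)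

lemma len_formula {w : V ≃ₗ[ℝ] V} (hw : w ∈ R.Wgrp) {α : V} (hα : α ∈ R.pos) :
    (R.len w : ℤ) - (R.len (w * R.s α) : ℤ) =
      2 * (((R.NS α).filter (fun β => -(w β) ∈ R.pos)).card : ℤ) - ((R.NS α).card : ℤ) := by
  have hαΦ : α ∈ R.Φ := R.pos_subset hα
  set C : Finset V := R.pos.filter (fun β => ¬ (R.s α β ∉ R.pos)) with hC
  -- splitting of a filtered count
  have hsplit1 : R.len w = ((R.NS α).filter (fun β => -(w β) ∈ R.pos)).card
      + (C.filter (fun β => -(w β) ∈ R.pos)).card := by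
    rw [len]
    have h1 : R.pos.filter (fun β => -(w β) ∈ R.pos)
        = (R.NS α).filter (fun β => -(w β) ∈ R.pos)
          ∪ C.filter (fun β => -(w β) ∈ R.pos) := by
      rw [NS, hC, ← Finset.filter_union, Finset.filter_union_filter_not_eq]
    rw [h1, Finset.card_union_of_disjoint]
    exact Finset.disjoint_filter_filter (Finset.disjoint_filter_filter_not R.pos R.pos _)
  have hsplit2 : R.len (w * R.s α) = ((R.NS α).filter (fun β => -(w (R.s α β)) ∈ R.pos)).card
      + (C.filter (fun β => -(w (R.s α β)) ∈ R.pos)).card := by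
    have hl : R.len (w * R.s α) = (R.pos.filter (fun β => -(w (R.s α β)) ∈ R.pos)).card := rfl
    rw [hl]
    have h1 : R.pos.filter (fun β => -(w (R.s α β)) ∈ R.pos)
        = (R.NS α).filter (fun β => -(w (R.s α β)) ∈ R.pos)
          ∪ C.filter (fun β => -(w (R.s α β)) ∈ R.pos) := by
      rw [NS, hC, ← Finset.filter_union, Finset.filter_union_filter_not_eq]
    rw [h1, Finset.card_union_of_disjoint]
    exact Finset.disjoint_filter_filter (Finset.disjoint_filter_filter_not R.pos R.pos _)
  -- the complement part is invariant
  have hCeq : (C.filter (fun β => -(w (R.s α β)) ∈ R.pos)).card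
      = (C.filter (fun β => -(w β) ∈ R.pos)).card := by
    apply Finset.card_bij' (fun β _ => R.s α β) (fun β _ => R.s α β)
    · intro β hβ
      rw [hC, Finset.mem_filter, Finset.mem_filter] at hβ ⊢
      obtain ⟨⟨hβp, hβs⟩, hβq⟩ := hβ
      push_neg at hβs
      refine ⟨⟨hβs, ?_⟩, hβq⟩
      rw [R.s_invol hαΦ]
      simp [hβp]
    · intro β hβ
      rw [hC, Finset.mem_filter, Finset.mem_filter] at hβ ⊢
      obtain ⟨⟨hβp, hβs⟩, hβq⟩ := hβ
      push_neg at hβs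
      refine ⟨⟨hβs, ?_⟩, ?_⟩
      · rw [R.s_invol hαΦ]; simp [hβp]
      · rw [R.s_invol hαΦ]; exact hβq
    · intro β _; exact R.s_invol hαΦ β
    · intro β _; exact R.s_invol hαΦ β
  -- the N_α part flips
  have hNeq : ((R.NS α).filter (fun β => -(w (R.s α β)) ∈ R.pos)).card
      = ((R.NS α).filter (fun β => w β ∈ R.pos)).card := by
    apply Finset.card_bij' (fun β _ => -(R.s α β)) (fun β _ => -(R.s α β))
    · intro β hβ
      rw [Finset.mem_filter] at hβ ⊢
      obtain ⟨hβN, hβq⟩ := hβ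
      refine ⟨R.tau_mem_NS hα hβN, ?_⟩
      rw [map_neg]
      exact hβq
    · intro β hβ
      rw [Finset.mem_filter] at hβ ⊢
      obtain ⟨hβN, hβq⟩ := hβ
      refine ⟨R.tau_mem_NS hα hβN, ?_⟩
      rw [map_neg, R.s_invol hαΦ, map_neg, neg_neg]
      exact hβq
    · intro β _; exact R.tau_tau hαΦ
    · intro β _; exact R.tau_tau hαΦ
  have hsplitN := R.card_NS_split hw hα
  omega

lemma two_mul_add_one_le {w : V ≃ₗ[ℝ] V} (hw : w ∈ R.Wgrp) {α : V} (hα : α ∈ R.pos)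
    (hwα : w α ∈ R.pos) :
    2 * ((R.NS α).filter (fun β => -(w β) ∈ R.pos)).card + 1 ≤ (R.NS α).card := by
  have hαΦ : α ∈ R.Φ := R.pos_subset hα
  set A : Finset V := (R.NS α).filter (fun β => -(w β) ∈ R.pos) with hA
  set Cs : Finset V := (R.NS α).filter (fun β => w β ∈ R.pos) with hCs
  have hinj : A.card ≤ (Cs.erase α).card := by
    apply Finset.card_le_card_of_injOn (fun β => -(R.s α β))
    · intro β hβ
      rw [hA, Finset.mem_coe, Finset.mem_filter] at hβ
      obtain ⟨hβN, hβq⟩ := hβ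
      have hβp : β ∈ R.pos := R.NS_subset hβN
      have hβΦ : β ∈ R.Φ := R.pos_subset hβp
      have htN : -(R.s α β) ∈ R.NS α := R.tau_mem_NS hα hβN
      have hc1 : (1:ℝ) ≤ R.coroot α β := by
        have := R.pairing_one_le hα hβN
        have hpe := R.pairing_eq α hαΦ β hβΦ
        rw [← hpe]
        exact_mod_cast this
      have hwt : w (-(R.s α β)) = R.coroot α β • (w α) - w β := by
        rw [R.s_apply α hαΦ β, map_neg, map_sub, map_smul]
        module
      have hffpos : 0 < R.ff (w (-(R.s α β))) := by
        rw [hwt, R.ff_sub, R.ff_smul]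
        have h1 : 0 < R.ff (w α) := R.ff_pos hwα
        have h2 : R.ff (w β) < 0 := by
          have h3 : 0 < R.ff (-(w β)) := R.ff_pos hβq
          rw [R.ff_neg_apply] at h3
          linarith
        nlinarith
      have hmem : w (-(R.s α β)) ∈ R.pos := by
        apply R.mem_pos_of_ff_pos _ hffpos
        exact R.maps_phi hw (R.NS_mem_phi htN)
      rw [Finset.mem_coe, Finset.mem_erase]
      constructor
      · intro hcontra
        have : β = α := by
          have := congrArg (fun v => R.s α (-v)) hcontra
          simp only [neg_neg] at this
          rw [R.s_invol hαΦ] at this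
          rw [this, map_neg, R.s_neg_self hαΦ, neg_neg] at hcontra
          -- hcontra : -(...)= α... recompute below
          exact this.trans (by rw [map_neg, R.s_neg_self hαΦ, neg_neg])
        rw [this] at hβq
        exact R.pos_not_neg _ hwα hβq
      · rw [hCs, Finset.mem_filter]
        exact ⟨htN, hmem⟩
    · intro β hβ β' hβ' heq
      have := neg_injective heq
      exact (R.s α).injective this
  have hαCs : α ∈ Cs := by
    rw [hCs, Finset.mem_filter]
    exact ⟨R.self_mem_NS hα, hwα⟩
  have hcerase : (Cs.erase α).card = Cs.card - 1 := Finset.card_erase_of_mem hαCs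
  have hsplit := R.card_NS_split hw hα
  rw [← hCs, ← hA] at hsplit
  have hCpos : 1 ≤ Cs.card := Finset.card_pos.mpr ⟨α, hαCs⟩
  omega

end RootSystemData


/-- for a valid labelled edge `w →^{(α,m)} w s_α` of `DBG(W)` one has
`m ⟨α∨, 2ρ⟩ ≥ ℓ(w) − ℓ(w s_α) + 1`, with equality iff the edge is an edge of `QBG(W)`,
i.e. iff `m = 0` and `ℓ(w s_α) = ℓ(w) + 1`, or `m = 1` and
`ℓ(w s_α) = ℓ(w) + 1 − ⟨α∨, 2ρ⟩`. -/
theorem statement16 (R : RootSystemData V)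
    (w : V ≃ₗ[ℝ] V) (hw : w ∈ R.Wgrp) (α : V) (hα : α ∈ R.pos)
    (m : ℤ) (hm : (if w α ∈ R.pos then (0 : ℤ) else 1) ≤ m) :
    ((R.len w : ℤ) - (R.len (w * R.s α) : ℤ) + 1 ≤ m * R.pairSum α)
    ∧ (m * R.pairSum α = (R.len w : ℤ) - (R.len (w * R.s α) : ℤ) + 1 ↔
        ((m = 0 ∧ R.len (w * R.s α) = R.len w + 1) ∨
          (m = 1 ∧ (R.len (w * R.s α) : ℤ) = (R.len w : ℤ) + 1 - R.pairSum α))) := by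
  have hαΦ : α ∈ R.Φ := R.pos_subset hα
  set a : ℕ := ((R.NS α).filter (fun β => -(w β) ∈ R.pos)).card with ha
  set n : ℕ := (R.NS α).card with hn
  have hD : (R.len w : ℤ) - (R.len (w * R.s α) : ℤ) = 2 * (a:ℤ) - (n:ℤ) := R.len_formula hw hα
  have hP : (n : ℤ) + 1 ≤ R.pairSum α := R.pairSum_ge hα
  have han : a ≤ n := Finset.card_le_card (Finset.filter_subset _ _)
  have hn1 : 1 ≤ n := Finset.card_pos.mpr ⟨α, R.self_mem_NS hα⟩
  have hPpos : 0 < R.pairSum α := by omega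
  constructor
  · by_cases hwα : w α ∈ R.pos
    · have hm0 : 0 ≤ m := by simpa [hwα] using hm
      have h4 : 2 * a + 1 ≤ n := R.two_mul_add_one_le hw hα hwα
      have h5 : (R.len w : ℤ) - (R.len (w * R.s α) : ℤ) + 1 ≤ 0 := by omega
      have h6 : 0 ≤ m * R.pairSum α := mul_nonneg hm0 (le_of_lt hPpos)
      linarith
    · have hm1 : 1 ≤ m := by simpa [hwα] using hm
      have h5 : (R.len w : ℤ) - (R.len (w * R.s α) : ℤ) + 1 ≤ (n:ℤ) + 1 := by omega
      have h6 : R.pairSum α ≤ m * R.pairSum α :=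
        le_mul_of_one_le_left (le_of_lt hPpos) hm1
      linarith
  · constructor
    · intro heq
      have hm0 : 0 ≤ m := by
        by_cases hwα : w α ∈ R.pos
        · simpa [hwα] using hm
        · have : (1:ℤ) ≤ m := by simpa [hwα] using hm
          omega
      have hcase : m = 0 ∨ m = 1 ∨ 2 ≤ m := by omega
      rcases hcase with hm' | hm' | hm'
      · left
        refine ⟨hm', ?_⟩
        rw [hm', zero_mul] at heq
        have : (R.len (w * R.s α) : ℤ) = (R.len w : ℤ) + 1 := by linarith
        exact_mod_cast this
      · right
        refine ⟨hm', ?_⟩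
        rw [hm', one_mul] at heq
        linarith
      · exfalso
        have hub : (R.len w : ℤ) - (R.len (w * R.s α) : ℤ) + 1 ≤ (n:ℤ) + 1 := by omega
        have h2P : 2 * R.pairSum α ≤ m * R.pairSum α := by
          have := mul_le_mul_of_nonneg_right hm' (le_of_lt hPpos)
          linarith
        linarith
    · intro h
      rcases h with ⟨hm0, hlen⟩ | ⟨hm1, hlen⟩
      · rw [hm0, zero_mul]
        have : (R.len (w * R.s α) : ℤ) = (R.len w : ℤ) + 1 := by exact_mod_cast hlen
        linarith
      · rw [hm1, one_mul]
        linarith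


end
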